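/- Weighted pointwise estimate for the loss (collision frequency) term: Let 0 ≤ κ ≤ 1 and let q₀ be a measurable angular kernel with 0 ≤ q₀ ≤ C_q. For every pair 0 < ϑ′ < ϑ < 1/4 with ϑ < 2ϑ′ there exist constants C > 0 and c > 0, depending only on ϑ, ϑ′, κ, C_q, such that for all measurable g, h : ℝ³ → ℝ with ‖e^{2ϑ′|·|²} h‖_{L^∞} < ∞ and all v ∈ ℝ³: e^{ϑ|v|²} |ν(√μ g)(v)| |h(v)| ≤ C ‖e^{2ϑ′|·|²} h‖_{L^∞} ∫_{ℝ³} e^{−c|v−u|²} |v−u|^{κ−2} |g(u)| du. -/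

import Mathlib

open MeasureTheory Real Set
noncomputable section

abbrev E3 := EuclideanSpace ℝ (Fin 3)

/-- The global Maxwellian `μ(v) = (2π)^{-3/2} exp(-|v|²/2)`. -/
def maxwellian (v : E3) : ℝ := (2 * π) ^ (-(3 : ℝ) / 2) * Real.exp (-‖v‖ ^ 2 / 2)

/-- The collision frequency `ν(√μ g)(v) = ∫∫ |v−u|^κ q₀((v−u)/|v−u|·ω) √μ(u) g(u) dω du`,
with angular integration w.r.t. the surface (2-Hausdorff) measure on `S²`. -/
def nuColl (κ : ℝ) (q₀ : ℝ → ℝ) (g : E3 → ℝ) (v : E3) : ℝ :=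
  ∫ u : E3, ∫ ω in Metric.sphere (0 : E3) 1,
    ‖v - u‖ ^ κ * q₀ ((inner ℝ (‖v - u‖⁻¹ • (v - u)) ω : ℝ)) *
      Real.sqrt (maxwellian u) * g u ∂(μH[2])

lemma aux_core {δ a b s c M : ℝ} (hδ : 0 < δ) (ha : 0 ≤ a) (hb : 0 ≤ b) (hs : 0 ≤ s)
    (hsab : s ≤ 2*a + 2*b) (hc1 : c ≤ δ/4) (hc2 : c ≤ 1/16) (hc0 : 0 < c)
    (hM1 : 4/δ ≤ M) (hM2' : 16 ≤ M) :
    s * Real.exp (-δ*a - b/4 + c * s) ≤ M := by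
  obtain ⟨t, ht⟩ : ∃ t : ℝ, t = δ/2*a + b/8 := ⟨_, rfl⟩
  have ht0 : 0 ≤ t := by rw [ht]; positivity
  have h1 : -δ*a - b/4 + c*s ≤ -t := by
    nlinarith [mul_le_mul_of_nonneg_right hc1 ha, mul_le_mul_of_nonneg_right hc2 hb,
      mul_le_mul_of_nonneg_left hsab hc0.le]
  have hM2 : (16:ℝ) ≤ M := hM2'
  have hM0 : (0:ℝ) < M := by linarith
  have h2 : s ≤ M * t := by
    have key : (2:ℝ) ≤ M*(δ/2) := by
      have h4 : (4/δ)*(δ/2) = 2 := by field_simp; ring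
      nlinarith [mul_le_mul_of_nonneg_right hM1 (le_of_lt (half_pos hδ))]
    have h2a := mul_le_mul_of_nonneg_right key ha
    have h2b := mul_le_mul_of_nonneg_right hM2 (by positivity : (0:ℝ) ≤ b/8)
    have hring : M*t = (M*(δ/2))*a + M*(b/8) := by rw [ht]; ring
    linarith
  have h3 : Real.exp (-δ*a - b/4 + c*s) ≤ Real.exp (-t) := Real.exp_le_exp.mpr h1
  have h4 : t * Real.exp (-t) ≤ 1 := by
    have h5 : t ≤ Real.exp t := by linarith [Real.add_one_le_exp t]
    rw [Real.exp_neg]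
    calc t * (Real.exp t)⁻¹ ≤ Real.exp t * (Real.exp t)⁻¹ :=
          mul_le_mul_of_nonneg_right h5 (inv_nonneg.mpr (Real.exp_pos t).le)
      _ = 1 := mul_inv_cancel₀ (Real.exp_pos t).ne'
  calc s * Real.exp (-δ*a - b/4 + c*s) ≤ (M*t) * Real.exp (-t) :=
        mul_le_mul h2 h3 (Real.exp_pos _).le (by positivity)
    _ = M * (t * Real.exp (-t)) := by ring
    _ ≤ M * 1 := mul_le_mul_of_nonneg_left h4 hM0.le
    _ = M := mul_one M

lemma aux_rot (q₀ : ℝ → ℝ) {e e' : E3} (h : ‖e‖ = ‖e'‖) :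
    (∫ ω in Metric.sphere (0:E3) 1, q₀ ((inner ℝ e' ω : ℝ)) ∂μH[2])
      = ∫ ω in Metric.sphere (0:E3) 1, q₀ ((inner ℝ e ω : ℝ)) ∂μH[2] := by
  set R := Submodule.reflection (ℝ ∙ (e - e'))ᗮ with hRdef
  have hRe : R e = e' := Submodule.reflection_sub h
  have hinner : ∀ ω : E3, (inner ℝ e' ω : ℝ) = inner ℝ e (R ω) := by
    intro ω
    have h1 := R.inner_map_map e (R ω)
    have h2 : R (R ω) = ω := Submodule.reflection_reflection _ ω
    rw [hRe, h2] at h1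
    exact h1
  set m : E3 ≃ᵐ E3 := R.toIsometryEquiv.toHomeomorph.toMeasurableEquiv with hm
  have hmx : ∀ x : E3, ‖m x‖ = ‖x‖ := fun x => R.norm_map x
  have hmap : Measure.map m (μH[2].restrict (Metric.sphere (0:E3) 1))
      = μH[2].restrict (Metric.sphere (0:E3) 1) := by
    ext s hs
    rw [MeasurableEquiv.map_apply, Measure.restrict_apply (m.measurable hs),
      Measure.restrict_apply hs]
    have hpre : m ⁻¹' s ∩ Metric.sphere (0:E3) 1 = m ⁻¹' (s ∩ Metric.sphere (0:E3) 1) := by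
      rw [Set.preimage_inter]
      congr 1
      ext x
      simp only [Set.mem_preimage, mem_sphere_zero_iff_norm, hmx]
    rw [hpre]
    exact R.toIsometryEquiv.hausdorffMeasure_preimage 2 _
  calc (∫ ω in Metric.sphere (0:E3) 1, q₀ ((inner ℝ e' ω : ℝ)) ∂μH[2])
      = ∫ ω in Metric.sphere (0:E3) 1, q₀ ((inner ℝ e (m ω) : ℝ)) ∂μH[2] := by
        refine integral_congr_ae (Filter.Eventually.of_forall fun ω => ?_)
        show q₀ ((inner ℝ e' ω : ℝ)) = q₀ ((inner ℝ e (m ω) : ℝ))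
        rw [hinner ω]
        rfl
    _ = ∫ ω, q₀ ((inner ℝ e ω : ℝ)) ∂(Measure.map m (μH[2].restrict (Metric.sphere (0:E3) 1))) :=
        (MeasureTheory.integral_map_equiv m fun ω => q₀ ((inner ℝ e ω : ℝ))).symm
    _ = ∫ ω in Metric.sphere (0:E3) 1, q₀ ((inner ℝ e ω : ℝ)) ∂μH[2] := by rw [hmap]

/-- Weighted pointwise estimate for the loss (collision frequency) term: for
`0 ≤ κ ≤ 1`, `0 ≤ q₀ ≤ C_q`, and `0 < ϑ′ < ϑ < 1/4` with `ϑ < 2ϑ′`, one has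
`e^{ϑ|v|²}|ν(√μ g)(v)||h(v)| ≤ C ‖e^{2ϑ′|·|²}h‖_∞ ∫ e^{-c|v-u|²}|v-u|^{κ-2}|g(u)| du`. -/

theorem loss_term_weighted_estimate (κ : ℝ) (hκ0 : 0 ≤ κ) (hκ1 : κ ≤ 1)
    (q₀ : ℝ → ℝ) (Cq : ℝ) (hq₀ : Measurable q₀) (hq : ∀ r, 0 ≤ q₀ r ∧ q₀ r ≤ Cq)
    (ϑ ϑ' : ℝ) (hϑ'0 : 0 < ϑ') (hϑ'ϑ : ϑ' < ϑ) (hϑ1 : ϑ < 1 / 4) (hϑ2 : ϑ < 2 * ϑ') :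
    ∃ C > (0 : ℝ), ∃ c > (0 : ℝ), ∀ g h : E3 → ℝ, Measurable g → Measurable h →
      ∀ Mh : ℝ, (∀ v : E3, Real.exp (2 * ϑ' * ‖v‖ ^ 2) * |h v| ≤ Mh) →
      ∀ v : E3,
        ENNReal.ofReal (Real.exp (ϑ * ‖v‖ ^ 2) * |nuColl κ q₀ g v| * |h v|) ≤
          ENNReal.ofReal (C * Mh) *
            ∫⁻ u : E3, ENNReal.ofReal
              (Real.exp (-c * ‖v - u‖ ^ 2) * ‖v - u‖ ^ (κ - 2) * |g u|) := by
  obtain ⟨δ, hδdef⟩ : ∃ δ : ℝ, δ = 2*ϑ' - ϑ := ⟨_, rfl⟩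
  have hδ : 0 < δ := by rw [hδdef]; linarith
  obtain ⟨c, hcdef⟩ : ∃ c : ℝ, c = min (δ/4) (1/16) := ⟨_, rfl⟩
  have hc : 0 < c := by rw [hcdef]; exact lt_min (by positivity) (by norm_num)
  obtain ⟨B, hBdef⟩ : ∃ B : ℝ, B = Real.sqrt ((2*π) ^ (-(3:ℝ)/2)) := ⟨_, rfl⟩
  have hB : 0 < B := by
    rw [hBdef]; exact Real.sqrt_pos.mpr (Real.rpow_pos_of_pos (by positivity) _)
  obtain ⟨e₀, he₀⟩ : ∃ e₀ : E3, ‖e₀‖ = 1 := ⟨EuclideanSpace.single 0 1, by simp⟩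
  obtain ⟨J₀, hJdef⟩ : ∃ J₀ : ℝ,
      J₀ = ∫ ω in Metric.sphere (0:E3) 1, q₀ ((inner ℝ e₀ ω : ℝ)) ∂μH[2] := ⟨_, rfl⟩
  obtain ⟨A, hAdef⟩ : ∃ A : ℝ, A = |J₀| := ⟨_, rfl⟩
  have hA : 0 ≤ A := hAdef ▸ abs_nonneg _
  obtain ⟨M, hMdef⟩ : ∃ M : ℝ, M = max (4/δ) 16 := ⟨_, rfl⟩
  have hM16 : (16:ℝ) ≤ M := hMdef ▸ le_max_right _ _
  obtain ⟨C, hCdef⟩ : ∃ C : ℝ, C = A*B*M + 1 := ⟨_, rfl⟩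
  have hABM : 0 ≤ A*B*M := by
    refine mul_nonneg (mul_nonneg hA hB.le) (by linarith)
  have hC : 0 < C := by rw [hCdef]; linarith
  refine ⟨C, hC, c, hc, ?_⟩
  intro g h hg hh Mh hMh v
  have hMh0 : 0 ≤ Mh := le_trans (by positivity) (hMh 0)
  have hCMh0 : 0 ≤ C * Mh := mul_nonneg hC.le hMh0
  -- inner integral
  obtain ⟨I, hI⟩ : ∃ I : E3 → ℝ, I = fun u => ∫ ω in Metric.sphere (0 : E3) 1,
      ‖v - u‖ ^ κ * q₀ ((inner ℝ (‖v - u‖⁻¹ • (v - u)) ω : ℝ)) *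
        Real.sqrt (maxwellian u) * g u ∂(μH[2]) := ⟨_, rfl⟩
  have hν : nuColl κ q₀ g v = ∫ u, I u := by rw [hI]; rfl
  have hsqrt : ∀ u : E3, Real.sqrt (maxwellian u) = B * Real.exp (-‖u‖^2/4) := by
    intro u
    rw [maxwellian, Real.sqrt_mul (by positivity), hBdef]
    congr 1
    rw [show -‖u‖^2/2 = (-‖u‖^2/4) + (-‖u‖^2/4) by ring, Real.exp_add,
      Real.sqrt_mul_self (Real.exp_pos _).le]
  have hIu : ∀ u : E3, v ≠ u →
      I u = (‖v-u‖^κ * Real.sqrt (maxwellian u) * g u) * J₀ := by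
    intro u huv
    have hw : (0:ℝ) < ‖v - u‖ := norm_pos_iff.mpr (sub_ne_zero.mpr huv)
    have he : ‖‖v-u‖⁻¹ • (v-u)‖ = 1 := by
      rw [norm_smul, norm_inv, norm_norm, inv_mul_cancel₀ hw.ne']
    have h1 : I u = ∫ ω in Metric.sphere (0:E3) 1,
        (‖v-u‖^κ * Real.sqrt (maxwellian u) * g u) *
          q₀ ((inner ℝ (‖v-u‖⁻¹ • (v-u)) ω : ℝ)) ∂μH[2] := by
      rw [hI]
      exact integral_congr_ae (Filter.Eventually.of_forall fun ω => by ring)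
    rw [h1, integral_const_mul, hJdef,
      aux_rot q₀ (he₀.trans he.symm)]
  have hae : ∀ᵐ u : E3, v ≠ u := by
    refine (ae_iff).mpr ?_
    have : {u : E3 | ¬ v ≠ u} = {v} := by ext x; simp [eq_comm]
    rw [this]
    exact measure_singleton v
  -- real pointwise bound
  have realkey : ∀ u : E3, v ≠ u →
      |I u| * (Mh * Real.exp (-δ*‖v‖^2)) ≤
        C * Mh * (Real.exp (-c*‖v-u‖^2) * ‖v-u‖^(κ-2) * |g u|) := by
    intro u huv
    have hw : (0:ℝ) < ‖v - u‖ := norm_pos_iff.mpr (sub_ne_zero.mpr huv)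
    have hs0 : (0:ℝ) < ‖v-u‖^2 := by positivity
    have habsI : |I u| = (‖v-u‖^κ * (B*Real.exp (-‖u‖^2/4)) * |g u|) * A := by
      rw [hIu u huv, hsqrt u, abs_mul, abs_mul, hAdef,
        abs_of_nonneg (by positivity : (0:ℝ) ≤ ‖v-u‖^κ * (B*Real.exp (-‖u‖^2/4)))]
    have hrw : ‖v-u‖^(κ-2) = ‖v-u‖^κ * (‖v-u‖^2)⁻¹ := by
      rw [Real.rpow_sub hw, div_eq_mul_inv]
      congr 2
      rw [show (2:ℝ) = ((2:ℕ):ℝ) by norm_num, Real.rpow_natCast]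
    have hsab : ‖v-u‖^2 ≤ 2*‖v‖^2 + 2*‖u‖^2 := by
      have h1 : ‖v-u‖ ≤ ‖v‖+‖u‖ := norm_sub_le v u
      nlinarith [norm_nonneg v, norm_nonneg u, sq_nonneg (‖v‖-‖u‖), norm_nonneg (v-u)]
    have hcore : ‖v-u‖^2 * Real.exp (-δ*‖v‖^2 - ‖u‖^2/4 + c*‖v-u‖^2) ≤ M :=
      aux_core hδ (by positivity) (by positivity) (by positivity) hsab
        (hcdef ▸ min_le_left _ _) (hcdef ▸ min_le_right _ _) hc
        (hMdef ▸ le_max_left _ _) hM16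
    have hP : A*B*(‖v-u‖^2 * Real.exp (-δ*‖v‖^2 - ‖u‖^2/4 + c*‖v-u‖^2)) ≤ A*B*M :=
      mul_le_mul_of_nonneg_left hcore (mul_nonneg hA hB.le)
    have hQ : A*B*Real.exp (-‖u‖^2/4)*Real.exp (-δ*‖v‖^2) ≤
        C * (Real.exp (-c*‖v-u‖^2) * (‖v-u‖^2)⁻¹) := by
      rw [show C * (Real.exp (-c*‖v-u‖^2) * (‖v-u‖^2)⁻¹)
          = (C * Real.exp (-c*‖v-u‖^2))/(‖v-u‖^2) by rw [div_eq_mul_inv]; ring,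
        le_div_iff₀ hs0, show -c*‖v-u‖^2 = -(c*‖v-u‖^2) by ring, Real.exp_neg,
        ← div_eq_mul_inv, le_div_iff₀ (Real.exp_pos _)]
      have hE : Real.exp (-‖u‖^2/4)*Real.exp (-δ*‖v‖^2)*Real.exp (c*‖v-u‖^2)
          = Real.exp (-δ*‖v‖^2 - ‖u‖^2/4 + c*‖v-u‖^2) := by
        rw [← Real.exp_add, ← Real.exp_add]; ring_nf
      calc A*B*Real.exp (-‖u‖^2/4)*Real.exp (-δ*‖v‖^2)*‖v-u‖^2*Real.exp (c*‖v-u‖^2)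
          = A*B*(‖v-u‖^2 * Real.exp (-δ*‖v‖^2 - ‖u‖^2/4 + c*‖v-u‖^2)) := by
            rw [← hE]; ring
        _ ≤ A*B*M := hP
        _ ≤ C := by rw [hCdef]; linarith
    have hfac : (0:ℝ) ≤ Mh * |g u| * ‖v-u‖^κ :=
      mul_nonneg (mul_nonneg hMh0 (abs_nonneg _)) (Real.rpow_nonneg hw.le _)
    calc |I u| * (Mh * Real.exp (-δ*‖v‖^2))
        = (Mh * |g u| * ‖v-u‖^κ) * (A*B*Real.exp (-‖u‖^2/4)*Real.exp (-δ*‖v‖^2)) := by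
          rw [habsI]; ring
      _ ≤ (Mh * |g u| * ‖v-u‖^κ) * (C * (Real.exp (-c*‖v-u‖^2) * (‖v-u‖^2)⁻¹)) :=
          mul_le_mul_of_nonneg_left hQ hfac
      _ = C * Mh * (Real.exp (-c*‖v-u‖^2) * ‖v-u‖^(κ-2) * |g u|) := by
          rw [hrw]; ring
  -- weight bound at v
  have hhv : Real.exp (ϑ*‖v‖^2) * |h v| ≤ Mh * Real.exp (-δ*‖v‖^2) := by
    have h1 := hMh v
    have h2 : Real.exp (ϑ*‖v‖^2) = Real.exp (-δ*‖v‖^2) * Real.exp (2*ϑ'*‖v‖^2) := by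
      rw [← Real.exp_add]; congr 1; rw [hδdef]; ring
    calc Real.exp (ϑ*‖v‖^2) * |h v|
        = Real.exp (-δ*‖v‖^2) * (Real.exp (2*ϑ'*‖v‖^2) * |h v|) := by rw [h2]; ring
      _ ≤ Real.exp (-δ*‖v‖^2) * Mh := mul_le_mul_of_nonneg_left h1 (Real.exp_pos _).le
      _ = Mh * Real.exp (-δ*‖v‖^2) := mul_comm _ _
  have step1 : Real.exp (ϑ*‖v‖^2) * |nuColl κ q₀ g v| * |h v| ≤
      |nuColl κ q₀ g v| * (Mh * Real.exp (-δ*‖v‖^2)) := by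
    calc Real.exp (ϑ*‖v‖^2) * |nuColl κ q₀ g v| * |h v|
        = |nuColl κ q₀ g v| * (Real.exp (ϑ*‖v‖^2) * |h v|) := by ring
      _ ≤ |nuColl κ q₀ g v| * (Mh * Real.exp (-δ*‖v‖^2)) :=
          mul_le_mul_of_nonneg_left hhv (abs_nonneg _)
  calc ENNReal.ofReal (Real.exp (ϑ*‖v‖^2) * |nuColl κ q₀ g v| * |h v|)
      ≤ ENNReal.ofReal (|nuColl κ q₀ g v| * (Mh * Real.exp (-δ*‖v‖^2))) :=
        ENNReal.ofReal_le_ofReal step1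
    _ = ENNReal.ofReal |nuColl κ q₀ g v| * ENNReal.ofReal (Mh * Real.exp (-δ*‖v‖^2)) :=
        ENNReal.ofReal_mul (abs_nonneg _)
    _ ≤ (∫⁻ u : E3, (‖I u‖₊ : ENNReal)) * ENNReal.ofReal (Mh * Real.exp (-δ*‖v‖^2)) := by
        refine mul_le_mul_left ?_ _
        rw [hν, ← Real.enorm_eq_ofReal_abs]
        exact enorm_integral_le_lintegral_enorm _
    _ = ∫⁻ u : E3, (‖I u‖₊ : ENNReal) * ENNReal.ofReal (Mh * Real.exp (-δ*‖v‖^2)) :=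
        (lintegral_mul_const' _ _ ENNReal.ofReal_ne_top).symm
    _ ≤ ∫⁻ u : E3, ENNReal.ofReal (C * Mh) *
          ENNReal.ofReal (Real.exp (-c*‖v-u‖^2) * ‖v-u‖^(κ-2) * |g u|) := by
        refine lintegral_mono_ae ?_
        filter_upwards [hae] with u huv
        rw [← enorm_eq_nnnorm, Real.enorm_eq_ofReal_abs, ← ENNReal.ofReal_mul (abs_nonneg _),
          ← ENNReal.ofReal_mul hCMh0]
        exact ENNReal.ofReal_le_ofReal (realkey u huv)
    _ = ENNReal.ofReal (C * Mh) *
          ∫⁻ u : E3, ENNReal.ofReal (Real.exp (-c*‖v-u‖^2) * ‖v-u‖^(κ-2) * |g u|) :=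
        lintegral_const_mul' _ _ ENNReal.ofReal_ne_top
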